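/- Let α ∈ (0,1] and μ, ν, c ∈ ℝ with c not a nonpositive integer. For x, t > 0 with |x^α| < 1, |t^α| < 1, and |x^α + t^α| < 1, Σ_{m=0}^∞ ((μ)_m (ν)_m / (c)_m) ₂F₁(μ+m, ν+m; c+m; x^α) · t^{αm}/m! = ₂F₁(μ, ν; c; x^α + t^α). -/

import Mathlib

open scoped Real BigOperators

noncomputable def poch (b : ℝ) (n : ℕ) : ℝ := (ascPochhammer ℝ n).eval b

noncomputable def F21 (μ ν c z : ℝ) : ℝ :=
  ∑' n : ℕ, poch μ n * poch ν n / (poch c n * (n.factorial : ℝ)) * z ^ n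

noncomputable def confD (α : ℝ) (f : ℝ → ℝ) : ℝ → ℝ :=
  fun x => x ^ (1 - α) * deriv f x

noncomputable def theta (α : ℝ) (f : ℝ → ℝ) : ℝ → ℝ :=
  fun x => (1 / α) * x ^ α * confD α f x

lemma poch_zero' (b : ℝ) : poch b 0 = 1 := by simp [poch]

lemma poch_succ' (b : ℝ) (n : ℕ) : poch b (n + 1) = poch b n * (b + n) := by
  simp [poch, ascPochhammer_succ_right]

lemma poch_add' (b : ℝ) (m n : ℕ) : poch b (m + n) = poch b m * poch (b + m) n := by
  induction n with
  | zero => simp [poch_zero']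
  | succ k ih =>
      have : m + (k + 1) = (m + k) + 1 := by ring
      rw [this, poch_succ', ih, poch_succ']
      push_cast
      ring

lemma poch_ne_zero' {c : ℝ} (hc : ∀ k : ℕ, c ≠ -(k : ℝ)) (n : ℕ) : poch c n ≠ 0 := by
  induction n with
  | zero => simp [poch_zero']
  | succ k ih =>
      rw [poch_succ']
      refine mul_ne_zero ih fun h => hc k ?_
      linarith

set_option maxHeartbeats 1200000 in
theorem stmt7 (α : ℝ) (hα : α ∈ Set.Ioc (0:ℝ) 1) (μ ν c : ℝ)
    (hc : ∀ k : ℕ, c ≠ -(k : ℝ)) (x t : ℝ) (hx : 0 < x) (ht : 0 < t)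
    (hx1 : |x ^ α| < 1) (ht1 : |t ^ α| < 1) (hxt : |x ^ α + t ^ α| < 1) :
    HasSum (fun m : ℕ => poch μ m * poch ν m / poch c m
        * F21 (μ + m) (ν + m) (c + m) (x ^ α) * t ^ (α * m) / (m.factorial : ℝ))
      (F21 μ ν c (x ^ α + t ^ α)) := by
  set Z : ℝ := x ^ α with hZdef
  set T : ℝ := t ^ α with hTdef
  have hZ : 0 < Z := Real.rpow_pos_of_pos hx α
  have hT : 0 < T := Real.rpow_pos_of_pos ht α
  set s : ℝ := Z + T with hsdef
  have hs0 : 0 < s := by positivity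
  have hs1 : s < 1 := by rwa [abs_of_pos hs0] at hxt
  set a : ℕ → ℝ := fun N => poch μ N * poch ν N / (poch c N * (N.factorial : ℝ)) with ha
  have hcN : ∀ N : ℕ, poch c N ≠ 0 := poch_ne_zero' hc
  have hcadd : ∀ N : ℕ, c + (N : ℝ) ≠ 0 := fun N h => hc N (by linarith)
  -- recurrence for a
  have harec : ∀ N : ℕ, a (N + 1) = a N * ((μ + N) * (ν + N) / ((c + N) * (N + 1))) := by
    intro N
    have hf : ((N.factorial : ℝ)) ≠ 0 := Nat.cast_ne_zero.mpr N.factorial_ne_zero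
    have hN1 : ((N : ℝ) + 1) ≠ 0 := by positivity
    simp only [ha, poch_succ', Nat.factorial_succ]
    push_cast
    field_simp
  -- summability of |a N| * s ^ N
  have hA : Summable (fun N : ℕ => |a N| * s ^ N) := by
    set r : ℝ := (1 + s) / 2 with hr
    have hr1 : r < 1 := by rw [hr]; linarith
    have hsr : s < r := by rw [hr]; linarith
    apply summable_of_ratio_norm_eventually_le hr1
    have hlim1 : Filter.Tendsto (fun N : ℕ => (μ + N) / ((N : ℝ) + 1)) Filter.atTop (nhds 1) := by
      have heq : (fun N : ℕ => (μ + N) / ((N : ℝ) + 1))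
          = fun N : ℕ => (μ - 1) * (1 / ((N : ℝ) + 1)) + 1 := by
        funext N
        have hN1 : ((N : ℝ) + 1) ≠ 0 := by positivity
        first
        | (field_simp; ring)
        | field_simp
      rw [heq]
      simpa using (tendsto_one_div_add_atTop_nhds_zero_nat.const_mul (μ - 1)).add
        (tendsto_const_nhds (x := (1 : ℝ)))
    have hlim2 : Filter.Tendsto (fun N : ℕ => (ν + N) / (c + (N : ℝ))) Filter.atTop (nhds 1) := by
      have heq : (fun N : ℕ => (ν + N) / (c + (N : ℝ)))
          = fun N : ℕ => (ν - c) * (c + (N : ℝ))⁻¹ + 1 := by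
        funext N
        have hN1 := hcadd N
        field_simp
        ring
      rw [heq]
      have ht1 : Filter.Tendsto (fun N : ℕ => c + (N : ℝ)) Filter.atTop Filter.atTop :=
        Filter.tendsto_atTop_add_const_left _ c tendsto_natCast_atTop_atTop
      simpa using (ht1.inv_tendsto_atTop.const_mul (ν - c)).add
        (tendsto_const_nhds (x := (1 : ℝ)))
    have hlim : Filter.Tendsto
        (fun N : ℕ => s * |(μ + N) * (ν + N) / ((c + N) * ((N : ℝ) + 1))|)
        Filter.atTop (nhds s) := by
      have heq : (fun N : ℕ => (μ + N) * (ν + N) / ((c + N) * ((N : ℝ) + 1)))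
          = fun N : ℕ => ((μ + N) / ((N : ℝ) + 1)) * ((ν + N) / (c + (N : ℝ))) := by
        funext N
        rw [div_mul_div_comm]
        ring_nf
      have h1 : Filter.Tendsto (fun N : ℕ => (μ + N) * (ν + N) / ((c + N) * ((N : ℝ) + 1)))
          Filter.atTop (nhds 1) := by
        rw [heq]; simpa using hlim1.mul hlim2
      have := (h1.abs.const_mul s)
      simpa using this
    filter_upwards [hlim.eventually_lt_const hsr] with N hN
    have hrecabs : |a (N + 1)| * s ^ (N + 1)
        = (s * |(μ + N) * (ν + N) / ((c + N) * ((N : ℝ) + 1))|) * (|a N| * s ^ N) := by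
      rw [harec N, abs_mul, pow_succ]
      ring
    have hnn : 0 ≤ |a N| * s ^ N := by positivity
    rw [Real.norm_eq_abs, Real.norm_eq_abs, abs_of_nonneg (by positivity),
      abs_of_nonneg hnn, hrecabs]
    exact mul_le_mul_of_nonneg_right hN.le hnn
  -- the double-indexed family
  set f : ℕ × ℕ → ℝ := fun p => a (p.1 + p.2) * ((p.1 + p.2).choose p.2 : ℝ)
    * Z ^ p.2 * T ^ p.1 with hf
  -- antidiagonal sums
  have hanti : ∀ N : ℕ, ∑ p ∈ Finset.HasAntidiagonal.antidiagonal N, f p = a N * s ^ N := by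
    intro N
    rw [Finset.Nat.sum_antidiagonal_eq_sum_range_succ_mk]
    have : ∀ k ∈ Finset.range (N + 1), f (k, N - k)
        = a N * (T ^ k * Z ^ (N - k) * (N.choose k : ℝ)) := by
      intro k hk
      have hkN : k ≤ N := Nat.lt_succ_iff.mp (Finset.mem_range.mp hk)
      have h1 : k + (N - k) = N := by omega
      simp only [hf, h1, Nat.choose_symm hkN]
      ring
    rw [Finset.sum_congr rfl this, ← Finset.mul_sum, ← add_pow, add_comm T Z]
  have hantiabs : ∀ N : ℕ, ∑ p ∈ Finset.HasAntidiagonal.antidiagonal N, |f p| = |a N| * s ^ N := by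
    intro N
    have : ∀ p ∈ Finset.HasAntidiagonal.antidiagonal N, |f p|
        = |a N| * ((N.choose p.2 : ℝ) * Z ^ p.2 * T ^ p.1) := by
      intro p hp
      have hpN : p.1 + p.2 = N := Finset.HasAntidiagonal.mem_antidiagonal.mp hp
      simp only [hf, hpN, abs_mul, abs_pow, abs_of_pos hZ, abs_of_pos hT,
        Nat.abs_cast]
      ring
    rw [Finset.sum_congr rfl this, ← Finset.mul_sum]
    congr 1
    rw [Finset.Nat.sum_antidiagonal_eq_sum_range_succ_mk]
    have h2 : ∀ k ∈ Finset.range (N + 1), (N.choose (N - k) : ℝ) * Z ^ (N - k) * T ^ k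
        = T ^ k * Z ^ (N - k) * (N.choose k : ℝ) := by
      intro k hk
      have hkN : k ≤ N := Nat.lt_succ_iff.mp (Finset.mem_range.mp hk)
      rw [Nat.choose_symm hkN]
      ring
    rw [Finset.sum_congr rfl h2, ← add_pow, add_comm T Z]
  -- absolute summability of f
  have hfabs : Summable (fun p : ℕ × ℕ => |f p|) := by
    apply Finset.HasAntidiagonal.sigmaAntidiagonalEquivProd.summable_iff.mp
    apply (summable_sigma_of_nonneg (fun _ => abs_nonneg _)).mpr
    refine ⟨fun N => Summable.of_finite, ?_⟩
    apply Summable.congr hA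
    intro N
    rw [tsum_fintype]
    rw [eq_comm]
    simp only [Finset.HasAntidiagonal.sigmaAntidiagonalEquivProd_apply]
    rw [Finset.sum_coe_sort (Finset.HasAntidiagonal.antidiagonal N) (fun p => |f p|)]
    exact hantiabs N
  have hfsummable : Summable f := hfabs.of_abs
  -- HasSum of f to the full hypergeometric value
  have hgsum : Summable (fun N : ℕ => a N * s ^ N) := by
    apply Summable.of_abs
    apply Summable.congr hA
    intro N
    rw [abs_mul, abs_pow, abs_of_pos hs0]
  have hg : HasSum (fun N : ℕ => a N * s ^ N) (F21 μ ν c s) := by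
    have : F21 μ ν c s = ∑' N : ℕ, a N * s ^ N := rfl
    rw [this]
    exact hgsum.hasSum
  have hfib : ∀ N : ℕ, HasSum
      (fun p : Finset.HasAntidiagonal.antidiagonal N =>
        (f ∘ Finset.HasAntidiagonal.sigmaAntidiagonalEquivProd) ⟨N, p⟩) (a N * s ^ N) := by
    intro N
    have := hasSum_fintype (fun p : Finset.HasAntidiagonal.antidiagonal N => f (p : ℕ × ℕ))
    rw [Finset.sum_coe_sort (Finset.HasAntidiagonal.antidiagonal N) f, hanti N] at this
    simpa only [Function.comp, Finset.HasAntidiagonal.sigmaAntidiagonalEquivProd_apply] using this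
  have hfsig : Summable (f ∘ Finset.HasAntidiagonal.sigmaAntidiagonalEquivProd) :=
    Finset.HasAntidiagonal.sigmaAntidiagonalEquivProd.summable_iff.mpr hfsummable
  have hfS : HasSum f (F21 μ ν c s) := by
    have := HasSum.sigma_of_hasSum hg hfib hfsig
    exact Finset.HasAntidiagonal.sigmaAntidiagonalEquivProd.hasSum_iff.mp this
  -- fiberwise sums
  apply hfS.prod_fiberwise
  intro m
  set Cm : ℝ := poch μ m * poch ν m / poch c m * T ^ m / (m.factorial : ℝ) with hCm
  have hterm : ∀ n : ℕ, f (m, n)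
      = Cm * (poch (μ + m) n * poch (ν + m) n
          / (poch (c + m) n * (n.factorial : ℝ)) * Z ^ n) := by
    intro n
    have hchooseN : (m + n).choose n * n.factorial * m.factorial = (m + n).factorial := by
      have := Nat.choose_mul_factorial_mul_factorial (Nat.le_add_left n m)
      simpa using this
    have hchoose : ((m + n).choose n : ℝ) * (n.factorial : ℝ) * (m.factorial : ℝ)
        = ((m + n).factorial : ℝ) := by exact_mod_cast hchooseN
    have h5 : (((m + n).choose n : ℕ) : ℝ) ≠ 0 :=
      Nat.cast_ne_zero.mpr (Nat.choose_pos (Nat.le_add_left n m)).ne'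

    have hcm : ∀ k : ℕ, c + (m : ℝ) ≠ -(k : ℝ) := by
      intro k h
      exact hc (k + m) (by push_cast; linarith)
    have h1 : poch c m ≠ 0 := hcN m
    have h2 : poch (c + m) n ≠ 0 := poch_ne_zero' hcm n
    have h3 : ((m.factorial : ℝ)) ≠ 0 := Nat.cast_ne_zero.mpr m.factorial_ne_zero
    have h4 : ((n.factorial : ℝ)) ≠ 0 := Nat.cast_ne_zero.mpr n.factorial_ne_zero
    simp only [hf, hCm, ha, poch_add' μ m n, poch_add' ν m n, poch_add' c m n]
    rw [← hchoose]
    field_simp [h1, h2, h3, h4, h5]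
  have hval : poch μ m * poch ν m / poch c m * F21 (μ + m) (ν + m) (c + m) Z
      * t ^ (α * (m : ℕ)) / (m.factorial : ℝ)
      = Cm * F21 (μ + m) (ν + m) (c + m) Z := by
    have hTm : t ^ (α * (m : ℕ)) = T ^ m := by
      rw [hTdef, Real.rpow_mul ht.le, Real.rpow_natCast]
    rw [hTm, hCm]
    ring
  rw [hval]
  by_cases hC : Cm = 0
  · have hzero : (fun n : ℕ => f (m, n)) = fun _ => (0 : ℝ) := by
      funext n; rw [hterm n, hC, zero_mul]
    rw [hzero, hC, zero_mul]
    exact hasSum_zero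
  · have hsm : Summable (fun n : ℕ => f (m, n)) := hfsummable.prod_factor m
    have hsmterm : Summable (fun n : ℕ => poch (μ + m) n * poch (ν + m) n
        / (poch (c + m) n * (n.factorial : ℝ)) * Z ^ n) := by
      have := hsm.div_const Cm
      apply this.congr
      intro n
      rw [hterm n, mul_div_cancel_left₀ _ hC]
    have hF : HasSum (fun n : ℕ => poch (μ + m) n * poch (ν + m) n
        / (poch (c + m) n * (n.factorial : ℝ)) * Z ^ n)
        (F21 (μ + m) (ν + m) (c + m) Z) := by
      have : F21 (μ + m) (ν + m) (c + m) Z = ∑' n : ℕ, poch (μ + m) n * poch (ν + m) n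
          / (poch (c + m) n * (n.factorial : ℝ)) * Z ^ n := rfl
      rw [this]
      exact hsmterm.hasSum
    have heqf : (fun n : ℕ => f (m, n)) = fun n : ℕ => Cm * (poch (μ + m) n * poch (ν + m) n
        / (poch (c + m) n * (n.factorial : ℝ)) * Z ^ n) := funext hterm
    rw [heqf]
    exact hF.mul_left Cm
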